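/- Let B > 0 and x₀ ∈ (0, 1), and define x(t) = x₀·e^{t/B} / √(1 − x₀² + x₀²·e^{2t/B}) for t ∈ ℝ. Then x(0) = x₀, x(t) ∈ (0, 1) for all t, and for every t the function x is differentiable at t with x'(t) = x(t)(1 − x(t)²)/B. That is, x solves the continuous spatial limit equation dx/di = x(1−x²)/B of the unbiased stationary iteration. -/

import Mathlib

/-- For B > 0, x₀ ∈ (0,1) and
x(t) = x₀e^{t/B}/√(1 − x₀² + x₀²e^{2t/B}), we have x(0) = x₀, x(t) ∈ (0,1)
for all t, and x solves x'(t) = x(t)(1 − x(t)²)/B. -/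
theorem continuous_limit_solution (B x₀ : ℝ) (hB : 0 < B)
    (hx₀ : x₀ ∈ Set.Ioo (0 : ℝ) 1)
    (x : ℝ → ℝ)
    (hx : ∀ t : ℝ, x t = x₀ * Real.exp (t / B) /
      Real.sqrt (1 - x₀ ^ 2 + x₀ ^ 2 * Real.exp (2 * t / B))) :
    x 0 = x₀ ∧
    (∀ t : ℝ, x t ∈ Set.Ioo (0 : ℝ) 1) ∧
    (∀ t : ℝ, HasDerivAt x (x t * (1 - (x t) ^ 2) / B) t) := by
  obtain ⟨h0, h1⟩ := hx₀
  have hD : ∀ t : ℝ, 0 < 1 - x₀ ^ 2 + x₀ ^ 2 * Real.exp (2 * t / B) := by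
    intro t
    nlinarith [Real.exp_pos (2 * t / B), sq_nonneg x₀]
  have hsq : ∀ t : ℝ, Real.exp (2 * t / B) = Real.exp (t / B) ^ 2 := by
    intro t
    rw [← Real.exp_nat_mul]
    ring_nf
  refine ⟨?_, ?_, ?_⟩
  · rw [hx 0]
    simp
  · intro t
    have hs : 0 < Real.sqrt (1 - x₀ ^ 2 + x₀ ^ 2 * Real.exp (2 * t / B)) :=
      Real.sqrt_pos.2 (hD t)
    constructor
    · rw [hx t]
      positivity
    · rw [hx t, div_lt_one hs]
      rw [Real.lt_sqrt (by positivity)]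
      rw [hsq t]
      nlinarith [Real.exp_pos (t / B)]
  · intro t
    have hsD : 0 < Real.sqrt (1 - x₀ ^ 2 + x₀ ^ 2 * Real.exp (2 * t / B)) :=
      Real.sqrt_pos.2 (hD t)
    have hs2 : Real.sqrt (1 - x₀ ^ 2 + x₀ ^ 2 * Real.exp (2 * t / B)) ^ 2
        = 1 - x₀ ^ 2 + x₀ ^ 2 * Real.exp (2 * t / B) := Real.sq_sqrt (hD t).le
    have hN : HasDerivAt (fun u => x₀ * Real.exp (u / B)) (x₀ * (Real.exp (t / B) * (1 / B))) t :=
      (((hasDerivAt_id t).div_const B).exp).const_mul x₀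
    have hDen : HasDerivAt (fun u => 1 - x₀ ^ 2 + x₀ ^ 2 * Real.exp (2 * u / B))
        (x₀ ^ 2 * (Real.exp (2 * t / B) * (2 * 1 / B))) t := by
      have h2 : HasDerivAt (fun u : ℝ => 2 * u / B) (2 * 1 / B) t :=
        ((hasDerivAt_id t).const_mul 2).div_const B
      simpa using ((h2.exp).const_mul (x₀ ^ 2)).const_add (1 - x₀ ^ 2)
    have hS : HasDerivAt (fun u => Real.sqrt (1 - x₀ ^ 2 + x₀ ^ 2 * Real.exp (2 * u / B)))
        (x₀ ^ 2 * (Real.exp (2 * t / B) * (2 * 1 / B)) /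
          (2 * Real.sqrt (1 - x₀ ^ 2 + x₀ ^ 2 * Real.exp (2 * t / B)))) t :=
      hDen.sqrt (hD t).ne'
    have hQ := hN.div hS hsD.ne'
    have hxfun : x = fun u => x₀ * Real.exp (u / B) /
        Real.sqrt (1 - x₀ ^ 2 + x₀ ^ 2 * Real.exp (2 * u / B)) := funext hx
    rw [hxfun]
    refine hQ.congr_deriv ?_
    symm
    beta_reduce
    rw [hsq t] at hs2 hsD ⊢
    set s := Real.sqrt (1 - x₀ ^ 2 + x₀ ^ 2 * Real.exp (t / B) ^ 2) with hsdef
    set E := Real.exp (t / B) with hEdef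
    field_simp
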